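/- arXiv:2005.13188 — 2 statements merged into one kernel-verified Lean document; each statement's English description precedes it below -/
import Mathlib

section
/- If a positive braid β in the braid group B_n is i-square free for every i = 1, …, n−1 (i.e., no positive word representing β contains the subword σ_i σ_i), then β can be represented by a positive braid word containing at most one occurrence of the generator σ_{n−1}. -/
/-- The braid relations among `m` Artin generators (indexed `0,…,m-1`,
corresponding to `σ_1,…,σ_m`): far commutation and the braid relation. -/
def braidRels (m : ℕ) : Set (FreeGroup (Fin m)) :=
  {r | (∃ i j : Fin m, (i : ℕ) + 2 ≤ (j : ℕ) ∧
        r = FreeGroup.of i * FreeGroup.of j * (FreeGroup.of i)⁻¹ * (FreeGroup.of j)⁻¹) ∨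
      (∃ i j : Fin m, (i : ℕ) + 1 = (j : ℕ) ∧
        r = FreeGroup.of i * FreeGroup.of j * FreeGroup.of i *
            (FreeGroup.of j * FreeGroup.of i * FreeGroup.of j)⁻¹)}

/-- The braid group `B_n` on `n` strands, with `n - 1` Artin generators. -/
abbrev BraidGroup (n : ℕ) := PresentedGroup (braidRels (n - 1))

/-- The Artin generator `σ_k` (1-indexed: `1 ≤ k ≤ n - 1`) of `B_n`;
defined to be `1` for out-of-range indices. -/
def sgen (n k : ℕ) : BraidGroup n :=
  if h : 1 ≤ k ∧ k ≤ n - 1 then PresentedGroup.of (⟨k - 1, by omega⟩ : Fin (n - 1)) else 1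

/-- The descending product `σ_hi · σ_{hi-1} · ⋯ · σ_lo` in `B_n`
(the empty product `1` if `hi < lo`). -/
def chain (n hi lo : ℕ) : BraidGroup n :=
  (((List.range' lo (hi + 1 - lo)).reverse).map (sgen n)).prod

namespace BraidAux

variable {m : ℕ}

lemma rel_one {r : FreeGroup (Fin m)} (h : r ∈ braidRels m) :
    PresentedGroup.mk (braidRels m) r = 1 := by
  have : r ∈ Subgroup.normalClosure (braidRels m) := Subgroup.subset_normalClosure h
  exact (QuotientGroup.eq_one_iff r).mpr this

lemma braid_comm (i j : Fin m) (h : (i:ℕ) + 2 ≤ (j:ℕ)) :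
    (PresentedGroup.of i : PresentedGroup (braidRels m)) * PresentedGroup.of j =
      PresentedGroup.of j * PresentedGroup.of i := by
  have h1 := rel_one (m := m)
    (r := FreeGroup.of i * FreeGroup.of j * (FreeGroup.of i)⁻¹ * (FreeGroup.of j)⁻¹)
    (Or.inl ⟨i, j, h, rfl⟩)
  have h2 : (PresentedGroup.of i : PresentedGroup (braidRels m)) * PresentedGroup.of j *
      (PresentedGroup.of i)⁻¹ * (PresentedGroup.of j)⁻¹ = 1 := by
    simpa [PresentedGroup.of, map_mul, map_inv] using h1
  rw [← mul_inv_eq_one, mul_inv_rev, ← mul_assoc]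
  exact h2

lemma braid_braid (i j : Fin m) (h : (i:ℕ) + 1 = (j:ℕ)) :
    (PresentedGroup.of i : PresentedGroup (braidRels m)) * PresentedGroup.of j *
      PresentedGroup.of i =
      PresentedGroup.of j * PresentedGroup.of i * PresentedGroup.of j := by
  have h1 := rel_one (m := m) (r := FreeGroup.of i * FreeGroup.of j * FreeGroup.of i *
      (FreeGroup.of j * FreeGroup.of i * FreeGroup.of j)⁻¹) (Or.inr ⟨i, j, h, rfl⟩)
  have h2 : (PresentedGroup.of i : PresentedGroup (braidRels m)) * PresentedGroup.of j *
      PresentedGroup.of i *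
      (PresentedGroup.of j * PresentedGroup.of i * PresentedGroup.of j)⁻¹ = 1 := by
    simpa [PresentedGroup.of, map_mul, map_inv] using h1
  rw [← mul_inv_eq_one]
  exact h2

/-- product of a positive word -/
def P (w : List (Fin m)) : PresentedGroup (braidRels m) :=
  (w.map PresentedGroup.of).prod

@[simp] lemma P_nil : P ([] : List (Fin m)) = 1 := rfl

@[simp] lemma P_cons (x : Fin m) (l : List (Fin m)) :
    P (x :: l) = PresentedGroup.of x * P l := by simp [P]

@[simp] lemma P_append (l1 l2 : List (Fin m)) : P (l1 ++ l2) = P l1 * P l2 := by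
  simp [P]

lemma prod_comm_of (x : Fin m) (l : List (Fin m)) (h : ∀ y ∈ l, (y:ℕ) + 2 ≤ (x:ℕ)) :
    P l * PresentedGroup.of x = PresentedGroup.of x * P l := by
  induction l with
  | nil => simp
  | cons y t ih =>
    have hy := h y (by simp)
    have ht : ∀ z ∈ t, (z:ℕ) + 2 ≤ (x:ℕ) := fun z hz => h z (by simp [hz])
    calc P (y :: t) * PresentedGroup.of x
        = PresentedGroup.of y * (P t * PresentedGroup.of x) := by simp [mul_assoc]
      _ = PresentedGroup.of y * (PresentedGroup.of x * P t) := by rw [ih ht]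
      _ = (PresentedGroup.of y * PresentedGroup.of x) * P t := by rw [mul_assoc]
      _ = (PresentedGroup.of x * PresentedGroup.of y) * P t := by rw [braid_comm y x hy]
      _ = PresentedGroup.of x * P (y :: t) := by simp [mul_assoc]

lemma exists_first (p : Fin m → Bool) (l : List (Fin m)) (h : l.countP p ≠ 0) :
    ∃ a x b, l = a ++ x :: b ∧ p x = true ∧ a.countP p = 0 := by
  induction l with
  | nil => simp at h
  | cons y t ih =>
    by_cases hy : p y = true
    · exact ⟨[], y, t, rfl, hy, rfl⟩
    · have hcount : (y :: t).countP p = t.countP p := by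
        rw [List.countP_cons_of_neg (by simpa using hy)]
      obtain ⟨a, x, b, h1, h2, h3⟩ := ih (by rw [← hcount]; exact h)
      exact ⟨y :: a, x, b, by simp [h1], h2,
        by rw [List.countP_cons_of_neg (by simpa using hy)]; exact h3⟩

lemma core_comm {G : Type*} [Group G] (x B C : G) (c : B * x = x * B) :
    B * (x * (x * C)) = x * (B * (x * C)) := by
  calc B * (x * (x * C)) = (B * x) * (x * C) := by rw [mul_assoc]
    _ = (x * B) * (x * C) := by rw [c]
    _ = x * (B * (x * C)) := by rw [mul_assoc]

lemma core_braid {G : Type*} [Group G] (x y B1 B2 C : G)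
    (c1 : B1 * x = x * B1) (c2 : B2 * x = x * B2) (br : y * x * y = x * y * x) :
    B1 * (y * (x * (y * (B2 * C)))) = x * (B1 * (y * B2) * (x * C)) := by
  have e1 : B1 * (y * (x * (y * (B2 * C)))) = B1 * (y * x * y) * (B2 * C) := by
    simp [mul_assoc]
  rw [e1, br]
  have e2 : B1 * (x * y * x) * (B2 * C) = (B1 * x) * y * (x * B2) * C := by
    simp [mul_assoc]
  rw [e2, c1, ← c2]
  simp [mul_assoc]

end BraidAux

namespace BraidAux

theorem key (m k cnt : ℕ) (v : List (Fin m))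
    (hc : v.countP (fun x : Fin m => decide ((x:ℕ) = k)) ≤ cnt)
    (hv : ∀ x ∈ v, (x:ℕ) ≤ k)
    (Hyp : ∀ v' : List (Fin m), (∀ x ∈ v', (x:ℕ) ≤ k) → P v' = P v →
        (∀ i : Fin m, ¬ ([i, i] <:+: v')) ∧ ∃ x ∈ v', (x:ℕ) = k) :
    ∃ (a b : List (Fin m)) (y : Fin m), (y:ℕ) = k ∧
      (∀ x ∈ a, (x:ℕ) + 1 ≤ k) ∧ (∀ x ∈ b, (x:ℕ) + 1 ≤ k) ∧
      P (a ++ y :: b) = P v := by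
  set p : Fin m → Bool := fun x : Fin m => decide ((x:ℕ) = k) with hp
  obtain ⟨hnsq, x0, hx0v, hx0k⟩ := Hyp v hv rfl
  have hc1 : 1 ≤ v.countP p := by
    rw [Nat.one_le_iff_ne_zero]
    intro h0
    exact (List.countP_eq_zero.mp h0 x0 hx0v) (by simp [hp, hx0k])
  by_cases hone : v.countP p = 1
  · -- exactly one occurrence: v itself works
    obtain ⟨a, x, b, hsplit, hpx, ha0⟩ := exists_first p v (by omega)
    have hxk : (x:ℕ) = k := by simpa [hp] using hpx
    have hcv : v.countP p = a.countP p + (b.countP p + 1) := by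
      rw [hsplit, List.countP_append, List.countP_cons_of_pos hpx]
    have hb0 : b.countP p = 0 := by omega
    refine ⟨a, b, x, hxk, ?_, ?_, by rw [hsplit]⟩
    · intro z hz
      have h1 : (z:ℕ) ≤ k := hv z (by simp [hsplit, hz])
      have h2 : ¬ ((z:ℕ) = k) := by
        have := List.countP_eq_zero.mp ha0 z hz; simpa [hp] using this
      omega
    · intro z hz
      have h1 : (z:ℕ) ≤ k := hv z (by simp [hsplit, hz])
      have h2 : ¬ ((z:ℕ) = k) := by
        have := List.countP_eq_zero.mp hb0 z hz; simpa [hp] using this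
      omega
  · -- at least two occurrences
    have h2c : 2 ≤ v.countP p := by omega
    obtain ⟨a, x, d, hsplit, hpx, ha0⟩ := exists_first p v (by omega)
    have hxk : (x:ℕ) = k := by simpa [hp] using hpx
    have hcv : v.countP p = a.countP p + (d.countP p + 1) := by
      rw [hsplit, List.countP_append, List.countP_cons_of_pos hpx]
    obtain ⟨b, x2, c, hd, hpx2, hb0⟩ := exists_first p d (by omega)
    have hx2k : (x2:ℕ) = k := by simpa [hp] using hpx2
    have hx2x : x2 = x := Fin.ext (by omega)
    rw [hx2x] at hd
    have hvsplit : v = a ++ x :: (b ++ x :: c) := by rw [hsplit, hd]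
    have hcd : d.countP p = b.countP p + (c.countP p + 1) := by
      rw [hd, List.countP_append, List.countP_cons_of_pos hpx]
    have hbnot : ∀ z ∈ b, ¬ ((z:ℕ) = k) := by
      intro z hz
      have := List.countP_eq_zero.mp hb0 z hz; simpa [hp] using this
    have hva : ∀ z ∈ a, (z:ℕ) ≤ k := fun z hz => hv z (by simp [hvsplit, hz])
    have hvc : ∀ z ∈ c, (z:ℕ) ≤ k := fun z hz => hv z (by simp [hvsplit, hz])
    rcases Nat.eq_zero_or_pos k with k0 | kpos
    · -- k = 0 : b must be empty, giving a square, contradiction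
      subst k0
      have hbnil : b = [] := by
        cases b with
        | nil => rfl
        | cons z t =>
          exact absurd (Nat.le_zero.mp (hv z (by simp [hvsplit]))) (hbnot z (by simp))
      exact absurd ⟨a, c, by simp [hvsplit, hbnil]⟩ (hnsq x)
    · -- k ≥ 1
      have hvb : ∀ z ∈ b, (z:ℕ) ≤ k - 1 := by
        intro z hz
        have h1 : (z:ℕ) ≤ k := hv z (by simp [hvsplit, hz])
        have h2 := hbnot z hz
        omega
      have Hyp_b : ∀ b' : List (Fin m), (∀ z ∈ b', (z:ℕ) ≤ k - 1) → P b' = P b →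
          (∀ i : Fin m, ¬ ([i, i] <:+: b')) ∧ ∃ z ∈ b', (z:ℕ) = k - 1 := by
        intro b' hb' hPb'
        have hv' : ∀ z ∈ (a ++ x :: (b' ++ x :: c)), (z:ℕ) ≤ k := by
          intro z hz
          simp only [List.mem_append, List.mem_cons] at hz
          rcases hz with h | h | h | h | h
          · exact hva z h
          · rw [h]; omega
          · exact le_trans (hb' z h) (by omega)
          · rw [h]; omega
          · exact hvc z h
        have hP' : P (a ++ x :: (b' ++ x :: c)) = P v := by
          rw [hvsplit]; simp only [P_append, P_cons]; rw [hPb']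
        obtain ⟨hq, -⟩ := Hyp _ hv' hP'
        constructor
        · intro i hi
          exact hq i (hi.trans ⟨a ++ [x], x :: c, by simp⟩)
        · by_contra hno
          push_neg at hno
          have hcomm : ∀ z ∈ b', (z:ℕ) + 2 ≤ (x:ℕ) := by
            intro z hz
            have h1 := hb' z hz
            have h2 := hno z hz
            omega
          have hPcomm : P b' * PresentedGroup.of x = PresentedGroup.of x * P b' :=
            prod_comm_of x b' hcomm
          have hP'' : P (a ++ (b' ++ x :: x :: c)) = P v := by
            rw [← hP']
            simp only [P_append, P_cons]
            congr 1
            exact core_comm _ _ _ hPcomm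
          have hv'' : ∀ z ∈ (a ++ (b' ++ x :: x :: c)), (z:ℕ) ≤ k := by
            intro z hz
            simp only [List.mem_append, List.mem_cons] at hz
            rcases hz with h | h | h | h | h
            · exact hva z h
            · exact le_trans (hb' z h) (by omega)
            · rw [h]; omega
            · rw [h]; omega
            · exact hvc z h
          obtain ⟨hq2, -⟩ := Hyp _ hv'' hP''
          exact hq2 x ⟨a ++ b', c, by simp⟩
      obtain ⟨b1, b2, y, hyk, hb1, hb2, hPb⟩ :=
        key m (k - 1) (b.countP (fun x : Fin m => decide ((x:ℕ) = k - 1))) b le_rfl hvb Hyp_b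
      have hb1x : ∀ z ∈ b1, (z:ℕ) + 2 ≤ (x:ℕ) := by
        intro z hz; have := hb1 z hz; omega
      have hb2x : ∀ z ∈ b2, (z:ℕ) + 2 ≤ (x:ℕ) := by
        intro z hz; have := hb2 z hz; omega
      have hbr : PresentedGroup.of y * PresentedGroup.of x * PresentedGroup.of y =
          PresentedGroup.of x * PresentedGroup.of y * PresentedGroup.of x :=
        braid_braid y x (by omega)
      have hPv2 : P (a ++ (b1 ++ y :: x :: y :: (b2 ++ c))) = P v := by
        rw [hvsplit]
        simp only [P_append, P_cons]
        rw [← hPb]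
        simp only [P_append, P_cons]
        congr 1
        exact core_braid _ _ _ _ _ (prod_comm_of x b1 hb1x) (prod_comm_of x b2 hb2x) hbr
      have hb1count : b1.countP p = 0 := by
        apply List.countP_eq_zero.mpr
        intro z hz; have := hb1 z hz; simp [hp]; omega
      have hb2count : b2.countP p = 0 := by
        apply List.countP_eq_zero.mpr
        intro z hz; have := hb2 z hz; simp [hp]; omega
      have hycount : ¬ (p y = true) := by simp [hp]; omega
      have hcv2 : (a ++ (b1 ++ y :: x :: y :: (b2 ++ c))).countP p + 1 = v.countP p := by
        rw [hvsplit]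
        simp only [List.countP_append, List.countP_cons_of_pos hpx,
          List.countP_cons_of_neg hycount, hb0, hb1count, hb2count, ha0]
        omega
      have Hyp2 : ∀ v' : List (Fin m), (∀ z ∈ v', (z:ℕ) ≤ k) →
          P v' = P (a ++ (b1 ++ y :: x :: y :: (b2 ++ c))) →
          (∀ i : Fin m, ¬ ([i, i] <:+: v')) ∧ ∃ z ∈ v', (z:ℕ) = k := by
        intro v' hv' hP'
        exact Hyp v' hv' (by rw [hP', hPv2])
      have hv2 : ∀ z ∈ (a ++ (b1 ++ y :: x :: y :: (b2 ++ c))), (z:ℕ) ≤ k := by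
        intro z hz
        simp only [List.mem_append, List.mem_cons] at hz
        rcases hz with h | h | h | h | h | h | h
        · exact hva z h
        · have := hb1 z h; omega
        · rw [h]; omega
        · rw [h]; omega
        · rw [h]; omega
        · have := hb2 z h; omega
        · exact hvc z h
      have hc' : List.countP p v ≤ cnt := hc
      have hccall : List.countP p (a ++ (b1 ++ y :: x :: y :: (b2 ++ c))) ≤ cnt - 1 := by
        omega
      have hcntpos : 1 ≤ cnt := by omega
      obtain ⟨A, B, Y, hY, hA, hB, hPfin⟩ :=
        key m k (cnt - 1) (a ++ (b1 ++ y :: x :: y :: (b2 ++ c))) hccall hv2 Hyp2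
      exact ⟨A, B, Y, hY, hA, hB, by rw [hPfin, hPv2]⟩
termination_by (k, cnt)
decreasing_by
  · exact Prod.Lex.left _ _ (by omega)
  · exact Prod.Lex.right _ (by omega)

end BraidAux

namespace BraidAux

theorem main_aux (m : ℕ) (hm : 1 ≤ m) (β : PresentedGroup (braidRels m))
    (hsf : ∀ w : List (Fin m), P w = β → ∀ i : Fin m, ¬ ([i, i] <:+: w)) :
    ∀ (cnt : ℕ) (w : List (Fin m)),
      w.countP (fun x : Fin m => decide ((x:ℕ) = m - 1)) ≤ cnt → P w = β →
      ∃ w' : List (Fin m), P w' = β ∧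
        w'.countP (fun x : Fin m => decide ((x:ℕ) = m - 1)) ≤ 1 := by
  intro cnt
  set p : Fin m → Bool := fun x : Fin m => decide ((x:ℕ) = m - 1) with hp
  set k : ℕ := m - 1 with hk
  induction cnt with
  | zero =>
    intro w hc hw
    exact ⟨w, hw, by omega⟩
  | succ cn ih =>
    intro w hc hw
    by_cases hone : w.countP p ≤ 1
    · exact ⟨w, hw, hone⟩
    · have hv : ∀ x ∈ w, (x:ℕ) ≤ k := by
        intro x _; have := x.isLt; omega
      obtain ⟨a, x, d, hsplit, hpx, ha0⟩ := exists_first p w (by omega)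
      have hxk : (x:ℕ) = k := by simpa [hp] using hpx
      have hcv : w.countP p = a.countP p + (d.countP p + 1) := by
        rw [hsplit, List.countP_append, List.countP_cons_of_pos hpx]
      obtain ⟨b, x2, c, hd, hpx2, hb0⟩ := exists_first p d (by omega)
      have hx2k : (x2:ℕ) = k := by simpa [hp] using hpx2
      have hx2x : x2 = x := Fin.ext (by omega)
      rw [hx2x] at hd
      have hvsplit : w = a ++ x :: (b ++ x :: c) := by rw [hsplit, hd]
      have hcd : d.countP p = b.countP p + (c.countP p + 1) := by
        rw [hd, List.countP_append, List.countP_cons_of_pos hpx]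
      have hbnot : ∀ z ∈ b, ¬ ((z:ℕ) = k) := by
        intro z hz
        have := List.countP_eq_zero.mp hb0 z hz; simpa [hp] using this
      rcases Nat.eq_zero_or_pos k with k0 | kpos
      · -- k = 0 : b must be empty, square, contradiction with hsf
        have hbnil : b = [] := by
          cases b with
          | nil => rfl
          | cons z t =>
            have hz := (hbnot z (by simp))
            have := z.isLt
            exact absurd (by omega) hz
        exact absurd ⟨a, c, by simp [hvsplit, hbnil]⟩ (hsf w hw x)
      · -- k ≥ 1
        have hvb : ∀ z ∈ b, (z:ℕ) ≤ k - 1 := by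
          intro z hz
          have h2 := hbnot z hz
          have := z.isLt
          omega
        have Hyp_b : ∀ b' : List (Fin m), (∀ z ∈ b', (z:ℕ) ≤ k - 1) → P b' = P b →
            (∀ i : Fin m, ¬ ([i, i] <:+: b')) ∧ ∃ z ∈ b', (z:ℕ) = k - 1 := by
          intro b' hb' hPb'
          have hP' : P (a ++ x :: (b' ++ x :: c)) = β := by
            rw [← hw, hvsplit]; simp only [P_append, P_cons]; rw [hPb']
          constructor
          · intro i hi
            exact hsf _ hP' i (hi.trans ⟨a ++ [x], x :: c, by simp⟩)
          · by_contra hno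
            push_neg at hno
            have hcomm : ∀ z ∈ b', (z:ℕ) + 2 ≤ (x:ℕ) := by
              intro z hz
              have h1 := hb' z hz
              have h2 := hno z hz
              omega
            have hPcomm : P b' * PresentedGroup.of x = PresentedGroup.of x * P b' :=
              prod_comm_of x b' hcomm
            have hP'' : P (a ++ (b' ++ x :: x :: c)) = β := by
              rw [← hP']
              simp only [P_append, P_cons]
              congr 1
              exact core_comm _ _ _ hPcomm
            exact hsf _ hP'' x ⟨a ++ b', c, by simp⟩
        obtain ⟨b1, b2, y, hyk, hb1, hb2, hPb⟩ :=
          key m (k - 1) (b.countP (fun x : Fin m => decide ((x:ℕ) = k - 1))) b le_rfl hvb Hyp_b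
        have hb1x : ∀ z ∈ b1, (z:ℕ) + 2 ≤ (x:ℕ) := by
          intro z hz; have := hb1 z hz; omega
        have hb2x : ∀ z ∈ b2, (z:ℕ) + 2 ≤ (x:ℕ) := by
          intro z hz; have := hb2 z hz; omega
        have hbr : PresentedGroup.of y * PresentedGroup.of x * PresentedGroup.of y =
            PresentedGroup.of x * PresentedGroup.of y * PresentedGroup.of x :=
          braid_braid y x (by omega)
        have hPv2 : P (a ++ (b1 ++ y :: x :: y :: (b2 ++ c))) = β := by
          rw [← hw, hvsplit]
          simp only [P_append, P_cons]
          rw [← hPb]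
          simp only [P_append, P_cons]
          congr 1
          exact core_braid _ _ _ _ _ (prod_comm_of x b1 hb1x) (prod_comm_of x b2 hb2x) hbr
        have hb1count : b1.countP p = 0 := by
          apply List.countP_eq_zero.mpr
          intro z hz; have := hb1 z hz; simp [hp]; omega
        have hb2count : b2.countP p = 0 := by
          apply List.countP_eq_zero.mpr
          intro z hz; have := hb2 z hz; simp [hp]; omega
        have hycount : ¬ (p y = true) := by simp [hp]; omega
        have hccall : (a ++ (b1 ++ y :: x :: y :: (b2 ++ c))).countP p ≤ cn := by
          have h1 : (a ++ (b1 ++ y :: x :: y :: (b2 ++ c))).countP p + 1 = w.countP p := by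
            rw [hvsplit]
            simp only [List.countP_append, List.countP_cons_of_pos hpx,
              List.countP_cons_of_neg hycount, hb0, hb1count, hb2count, ha0]
            omega
          omega
        exact ih _ hccall hPv2

lemma count_conv {m : ℕ} (t : Fin m) (l : List (Fin m)) :
    l.count t = l.countP (fun x : Fin m => decide ((x:ℕ) = (t:ℕ))) := by
  induction l with
  | nil => rfl
  | cons z l ih =>
    rw [List.count_cons, List.countP_cons, ih]
    congr 1
    by_cases h : z = t
    · simp [h]
    · have h2 : ¬((z:ℕ) = (t:ℕ)) := fun hh => h (Fin.ext hh)
      simp [h, h2]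

end BraidAux

/-- if a positive braid β ∈ B_n is i-square free for every i
(no positive word representing β contains σ_i σ_i), then β is represented
by a positive word containing at most one occurrence of σ_{n-1}. -/
theorem squareFree_at_most_one_top_generator (n : ℕ) (hn : 2 ≤ n) (β : BraidGroup n)
    (hpos : ∃ w : List (Fin (n - 1)), (w.map PresentedGroup.of).prod = β)
    (hsf : ∀ w : List (Fin (n - 1)), (w.map PresentedGroup.of).prod = β →
      ∀ i : Fin (n - 1), ¬ ([i, i] <:+: w)) :
    ∃ w : List (Fin (n - 1)), (w.map PresentedGroup.of).prod = β ∧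
      w.count (⟨n - 2, by omega⟩ : Fin (n - 1)) ≤ 1 := by

  obtain ⟨w, hw⟩ := hpos
  have hw' : BraidAux.P w = β := hw
  have hsf' : ∀ w : List (Fin (n - 1)), BraidAux.P w = β →
      ∀ i : Fin (n - 1), ¬ ([i, i] <:+: w) := hsf
  obtain ⟨w', hP, hcount⟩ := BraidAux.main_aux (n - 1) (by omega) β hsf'
    (w.countP (fun x : Fin (n - 1) => decide ((x:ℕ) = n - 1 - 1))) w le_rfl hw'
  refine ⟨w', hP, ?_⟩
  have ht : ((⟨n - 2, by omega⟩ : Fin (n - 1)) : ℕ) = n - 1 - 1 := by simp; omega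
  rw [BraidAux.count_conv, ht]
  exact hcount
end

section
/- In the braid group B_n, the braid σ_1 B_0 σ_j^{a} σ_{j−1} σ_{j−2} ⋯ σ_2 σ_1 B_1 σ_j^{2} σ_{j−1} ⋯ σ_3 σ_2 is conjugate to σ_1 · (σ_2 B_1 σ_j^2 σ_{j−1} ⋯ σ_3 σ_2 B_0 σ_j^a σ_{j−1} ⋯ σ_3 σ_2), for any j ≥ 3, a ≥ 1, and B_0, B_1 in the subgroup generated by σ_{j+1}, …, σ_{n−1}. -/
lemma braid_rel_one {m : ℕ} {r : FreeGroup (Fin m)} (h : r ∈ braidRels m) :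
    PresentedGroup.mk (braidRels m) r = 1 :=
  (QuotientGroup.eq_one_iff r).mpr (Subgroup.subset_normalClosure h)

lemma sgen_commute (n p q : ℕ) (h : p + 2 ≤ q) : Commute (sgen n p) (sgen n q) := by
  unfold sgen
  by_cases hp : 1 ≤ p ∧ p ≤ n - 1
  · by_cases hq : 1 ≤ q ∧ q ≤ n - 1
    · rw [dif_pos hp, dif_pos hq]
      have hr : (FreeGroup.of (⟨p-1, by omega⟩ : Fin (n-1)) * FreeGroup.of (⟨q-1, by omega⟩ : Fin (n-1)) * (FreeGroup.of (⟨p-1, by omega⟩ : Fin (n-1)))⁻¹ * (FreeGroup.of (⟨q-1, by omega⟩ : Fin (n-1)))⁻¹) ∈ braidRels (n-1) := by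
        left
        exact ⟨⟨p-1, by omega⟩, ⟨q-1, by omega⟩, by simp; omega, rfl⟩
      have := braid_rel_one hr
      simp only [map_mul, map_inv] at this
      have h2 : ∀ x : Fin (n-1), PresentedGroup.mk (braidRels (n-1)) (FreeGroup.of x) = (PresentedGroup.of x : BraidGroup n) := fun _ => rfl
      rw [h2, h2] at this
      have h3 : ∀ x y : BraidGroup n, x * y * x⁻¹ * y⁻¹ = 1 → Commute x y := by
        intro x y hxy
        have : (x*y) * (y*x)⁻¹ = 1 := by rw [← hxy]; group
        exact mul_inv_eq_one.mp this
      exact h3 _ _ this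
    · rw [dif_neg hq]; exact Commute.one_right _
  · rw [dif_neg hp]; exact Commute.one_left _

lemma sgen_braid (n p : ℕ) (h1 : 1 ≤ p) (h2 : p + 1 ≤ n - 1) :
    sgen n p * sgen n (p+1) * sgen n p = sgen n (p+1) * sgen n p * sgen n (p+1) := by
  unfold sgen
  rw [dif_pos ⟨h1, by omega⟩, dif_pos ⟨by omega, h2⟩]
  have hr : (FreeGroup.of (⟨p-1, by omega⟩ : Fin (n-1)) * FreeGroup.of (⟨p+1-1, by omega⟩ : Fin (n-1)) * FreeGroup.of (⟨p-1, by omega⟩ : Fin (n-1)) * (FreeGroup.of (⟨p+1-1, by omega⟩ : Fin (n-1)) * FreeGroup.of (⟨p-1, by omega⟩ : Fin (n-1)) * FreeGroup.of (⟨p+1-1, by omega⟩ : Fin (n-1)))⁻¹) ∈ braidRels (n-1) := by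
    right
    exact ⟨⟨p-1, by omega⟩, ⟨p+1-1, by omega⟩, by simp; omega, rfl⟩
  have := braid_rel_one hr
  simp only [map_mul, map_inv] at this
  have h2' : ∀ x : Fin (n-1), PresentedGroup.mk (braidRels (n-1)) (FreeGroup.of x) = (PresentedGroup.of x : BraidGroup n) := fun _ => rfl
  rw [h2', h2'] at this
  have := mul_inv_eq_one.mp this
  exact this

lemma chain_commute (n hi lo p : ℕ) (h : p + 2 ≤ lo) : Commute (sgen n p) (chain n hi lo) := by
  unfold chain
  apply Commute.list_prod_right
  intro x hx
  simp only [List.mem_map, List.mem_reverse, List.mem_range'_1] at hx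
  obtain ⟨k, ⟨hk1, _⟩, rfl⟩ := hx
  exact sgen_commute n p k (by omega)

lemma chain_split (n hi lo : ℕ) (h : lo ≤ hi) :
    chain n hi lo = chain n hi (lo+1) * sgen n lo := by
  unfold chain
  have h1 : hi + 1 - lo = (hi - lo) + 1 := by omega
  have h2 : hi + 1 - (lo + 1) = hi - lo := by omega
  rw [h1, h2, List.range'_succ, List.reverse_cons, List.map_append, List.prod_append]
  simp

lemma closure_commute (n j p : ℕ) (hp : p + 1 ≤ j) (B : BraidGroup n)
    (hB : B ∈ Subgroup.closure {x : BraidGroup n | ∃ k, j + 1 ≤ k ∧ k ≤ n - 1 ∧ x = sgen n k}) :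
    Commute (sgen n p) B := by
  induction hB using Subgroup.closure_induction with
  | mem x hx =>
    obtain ⟨k, hk1, _, rfl⟩ := hx
    exact sgen_commute n p k (by omega)
  | one => exact Commute.one_right _
  | mul x y _ _ hx hy => exact hx.mul_right hy
  | inv x _ hx => exact hx.inv_right

/-- σ_1 B_0 σ_j^a σ_{j−1}⋯σ_2σ_1 B_1 σ_j² σ_{j−1}⋯σ_3σ_2 is conjugate to
σ_1 · (σ_2 B_1 σ_j² σ_{j−1}⋯σ_3σ_2 B_0 σ_j^a σ_{j−1}⋯σ_3σ_2), for j ≥ 3, a ≥ 1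
and B_0, B_1 ∈ ⟨σ_{j+1},…,σ_{n−1}⟩. -/
theorem final_conjugation (n j a : ℕ) (hj : 3 ≤ j) (hjn : j ≤ n - 1) (ha : 1 ≤ a)
    (B0 B1 : BraidGroup n)
    (h0 : B0 ∈ Subgroup.closure {x : BraidGroup n | ∃ k, j + 1 ≤ k ∧ k ≤ n - 1 ∧ x = sgen n k})
    (h1 : B1 ∈ Subgroup.closure {x : BraidGroup n | ∃ k, j + 1 ≤ k ∧ k ≤ n - 1 ∧ x = sgen n k}) :
    IsConj
      (sgen n 1 * B0 * (sgen n j) ^ a * chain n (j - 1) 1 * B1 * (sgen n j) ^ 2 *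
        chain n (j - 1) 2)
      (sgen n 1 * (sgen n 2 * B1 * (sgen n j) ^ 2 * chain n (j - 1) 2 * B0 * (sgen n j) ^ a *
        chain n (j - 1) 2)) := by
  set s1 := sgen n 1 with hs1
  set s2 := sgen n 2 with hs2
  set sj := sgen n j with hsj
  set C3 := chain n (j-1) 3 with hC3
  have hc2 : chain n (j-1) 2 = C3 * s2 := by
    rw [hC3, hs2]; exact chain_split n (j-1) 2 (by omega)
  have hc1 : chain n (j-1) 1 = C3 * s2 * s1 := by
    rw [← hc2, hs1]; exact chain_split n (j-1) 1 (by omega)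
  set W1 := B0 * sj ^ a * (C3 * s2) with hW1
  set W2 := B1 * sj ^ 2 * C3 with hW2
  -- commutations of s1
  have c1B0 : Commute s1 B0 := closure_commute n j 1 (by omega) B0 h0
  have c1j : Commute s1 sj := sgen_commute n 1 j (by omega)
  have c1C3 : Commute s1 C3 := chain_commute n (j-1) 3 1 (by omega)
  have braid : s1 * s2 * s1 = s2 * s1 * s2 := sgen_braid n 1 le_rfl (by omega)
  -- key identity : W1 * s1 * s2 = s1 * W1 * s1
  have key : W1 * s1 * s2 = s1 * W1 * s1 := by
    have e1 : W1 * s1 * s2 = B0 * sj ^ a * C3 * (s2 * s1 * s2) := by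
      rw [hW1]; group
    have e2 : s1 * W1 * s1 = B0 * sj ^ a * C3 * (s1 * s2 * s1) := by
      rw [hW1]
      have : s1 * (B0 * sj ^ a * (C3 * s2)) = B0 * sj ^ a * C3 * s1 * s2 := by
        rw [← mul_assoc, ← mul_assoc, ← mul_assoc,
          c1B0.eq]
        rw [mul_assoc B0 s1 (sj ^ a), (c1j.pow_right a).eq, ← mul_assoc,
          mul_assoc _ s1 C3, c1C3.eq, ← mul_assoc]
      rw [this]; group
    rw [e1, e2, braid]
  -- rewrite LHS and RHS
  have hL : s1 * B0 * sj ^ a * chain n (j-1) 1 * B1 * sj ^ 2 * chain n (j-1) 2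
      = s1 * W1 * s1 * W2 * s2 := by
    rw [hc1, hc2, hW1, hW2]; group
  have hR : s1 * (s2 * B1 * sj ^ 2 * chain n (j-1) 2 * B0 * sj ^ a * chain n (j-1) 2)
      = s1 * s2 * W2 * s2 * W1 := by
    rw [hc2, hW1, hW2]; group
  rw [hL, hR]
  rw [isConj_iff]
  refine ⟨s1 * s2 * W2 * s2, ?_⟩
  have expand : s1 * s2 * W2 * s2 * (s1 * W1 * s1 * W2 * s2) * (s1 * s2 * W2 * s2)⁻¹
      = s1 * s2 * W2 * (s2 * (s1 * W1 * s1) * s2⁻¹ * s1⁻¹) := by group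
  rw [expand, ← key]
  group
end
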